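/- A Bell decomposable state with parameters (t₁,t₂,t₃) has positive partial transpose if and only if in addition to the positivity conditions one has 1+t₁+t₂+t₃ ≥ 0, 1−t₁−t₂+t₃ ≥ 0, 1+t₁−t₂−t₃ ≥ 0, and 1−t₁+t₂−t₃ ≥ 0. -/

import Mathlib

open Matrix Kronecker Complex BigOperators

noncomputable section

def σ1 : Matrix (Fin 2) (Fin 2) ℂ := !![0, 1; 1, 0]
def σ2 : Matrix (Fin 2) (Fin 2) ℂ := !![0, -Complex.I; Complex.I, 0]
def σ3 : Matrix (Fin 2) (Fin 2) ℂ := !![1, 0; 0, -1]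

/-- Bell decomposable state on C²⊗C², indexed by product indices. -/
def ρBDk (t1 t2 t3 : ℝ) : Matrix (Fin 2 × Fin 2) (Fin 2 × Fin 2) ℂ :=
  (1/4 : ℂ) • ((1 : Matrix (Fin 2 × Fin 2) (Fin 2 × Fin 2) ℂ)
    + (t1 : ℂ) • (σ1 ⊗ₖ σ1) + (t2 : ℂ) • (σ2 ⊗ₖ σ2) + (t3 : ℂ) • (σ3 ⊗ₖ σ3))

/-- Partial transpose with respect to the second tensor factor:
each 2×2 block Bᵢⱼ of Σ Aᵢⱼ ⊗ Bᵢⱼ is replaced by its transpose. -/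
def ptB (M : Matrix (Fin 2 × Fin 2) (Fin 2 × Fin 2) ℂ) :
    Matrix (Fin 2 × Fin 2) (Fin 2 × Fin 2) ℂ :=
  fun p q => M (p.1, q.2) (q.1, p.2)

/-- The four (unnormalized) Bell vectors. -/
def w1 : Fin 2 × Fin 2 → ℂ := fun p => if p.1 = p.2 then 1 else 0
def w2 : Fin 2 × Fin 2 → ℂ := fun p => if p = (0,0) then 1 else if p = (1,1) then -1 else 0
def w3 : Fin 2 × Fin 2 → ℂ := fun p => if p.1 = p.2 then 0 else 1
def w4 : Fin 2 × Fin 2 → ℂ := fun p => if p = (0,1) then 1 else if p = (1,0) then -1 else 0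

/-- Spectral decomposition of the Bell decomposable state. -/
lemma bd_decomp (a b c : ℝ) : ρBDk a b c =
    (((1+a-b+c)/8 : ℝ) : ℂ) • vecMulVec w1 (star w1)
    + (((1-a+b+c)/8 : ℝ) : ℂ) • vecMulVec w2 (star w2)
    + (((1+a+b-c)/8 : ℝ) : ℂ) • vecMulVec w3 (star w3)
    + (((1-a-b-c)/8 : ℝ) : ℂ) • vecMulVec w4 (star w4) := by
  ext ⟨i,j⟩ ⟨k,l⟩
  fin_cases i <;> fin_cases j <;> fin_cases k <;> fin_cases l <;>
    simp [ρBDk, σ1, σ2, σ3, w1, w2, w3, w4, vecMulVec_apply, Matrix.one_apply,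
      Prod.ext_iff] <;> ring

/-- Partial transpose of a Bell decomposable state flips the sign of t₂. -/
lemma ptb_bd (t1 t2 t3 : ℝ) : ptB (ρBDk t1 t2 t3) = ρBDk t1 (-t2) t3 := by
  ext ⟨i,j⟩ ⟨k,l⟩
  fin_cases i <;> fin_cases j <;> fin_cases k <;> fin_cases l <;>
    simp [ptB, ρBDk, σ1, σ2, σ3, Matrix.one_apply, Prod.ext_iff]

open scoped ComplexOrder in
lemma psd_vmv (v : Fin 2 × Fin 2 → ℂ) : (vecMulVec v (star v)).PosSemidef := by
  have h := posSemidef_conjTranspose_mul_self (Matrix.replicateRow Unit (star v))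
  have e : (Matrix.replicateRow Unit (star v))ᴴ * Matrix.replicateRow Unit (star v) = vecMulVec v (star v) := by
    ext p q
    simp [vecMulVec_apply, Matrix.mul_apply, conjTranspose_apply, mul_comm]
  rwa [e] at h

open scoped ComplexOrder in
lemma psd_smul' {n : Type*} [Fintype n] {M : Matrix n n ℂ} (hM : M.PosSemidef)
    (r : ℝ) (hr : 0 ≤ r) : (((r : ℝ) : ℂ) • M).PosSemidef := by
  refine posSemidef_iff_dotProduct_mulVec.mpr ⟨?_, fun x => ?_⟩
  · unfold Matrix.IsHermitian
    rw [conjTranspose_smul, hM.1]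
    norm_num
  · rw [smul_mulVec, dotProduct_smul, smul_eq_mul]
    have h0 := hM.dotProduct_mulVec_nonneg x
    rw [Complex.le_def] at h0 ⊢
    constructor
    · simp only [Complex.mul_re, Complex.ofReal_re, Complex.ofReal_im, Complex.zero_re] at *
      nlinarith [h0.1]
    · simp only [Complex.mul_im, Complex.ofReal_re, Complex.ofReal_im, Complex.zero_im] at *
      simp [← h0.2]

open scoped ComplexOrder in
/-- Positive semidefiniteness of a Bell decomposable state. -/
lemma bd_psd_iff (a b c : ℝ) : (ρBDk a b c).PosSemidef ↔
    0 ≤ 1+a-b+c ∧ 0 ≤ 1-a+b+c ∧ 0 ≤ 1+a+b-c ∧ 0 ≤ 1-a-b-c := by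
  constructor
  · intro hP
    refine ⟨?_, ?_, ?_, ?_⟩
    · have h := hP.dotProduct_mulVec_nonneg w1
      simp [ρBDk, σ1, σ2, σ3, dotProduct, mulVec, Fintype.sum_prod_type, Fin.sum_univ_two,
        w1, Matrix.one_apply, Prod.ext_iff, Complex.le_def] at h
      linarith
    · have h := hP.dotProduct_mulVec_nonneg w2
      simp [ρBDk, σ1, σ2, σ3, dotProduct, mulVec, Fintype.sum_prod_type, Fin.sum_univ_two,
        w2, Matrix.one_apply, Prod.ext_iff, Complex.le_def] at h
      linarith
    · have h := hP.dotProduct_mulVec_nonneg w3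
      simp [ρBDk, σ1, σ2, σ3, dotProduct, mulVec, Fintype.sum_prod_type, Fin.sum_univ_two,
        w3, Matrix.one_apply, Prod.ext_iff, Complex.le_def] at h
      linarith
    · have h := hP.dotProduct_mulVec_nonneg w4
      simp [ρBDk, σ1, σ2, σ3, dotProduct, mulVec, Fintype.sum_prod_type, Fin.sum_univ_two,
        w4, Matrix.one_apply, Prod.ext_iff, Complex.le_def] at h
      linarith
  · rintro ⟨k1, k2, k3, k4⟩
    rw [bd_decomp]
    exact (((psd_smul' (psd_vmv w1) _ (by linarith)).add
      (psd_smul' (psd_vmv w2) _ (by linarith))).add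
      (psd_smul' (psd_vmv w3) _ (by linarith))).add
      (psd_smul' (psd_vmv w4) _ (by linarith))

open scoped ComplexOrder in
/-- a Bell decomposable state has positive partial transpose iff the
four octahedron inequalities hold (in addition to the positivity conditions). -/
theorem bd_ppt_iff (t1 t2 t3 : ℝ)
    (h1 : 0 ≤ 1 + t1 - t2 + t3) (h2 : 0 ≤ 1 - t1 + t2 + t3)
    (h3 : 0 ≤ 1 + t1 + t2 - t3) (h4 : 0 ≤ 1 - t1 - t2 - t3) :
    (ptB (ρBDk t1 t2 t3)).PosSemidef ↔
      0 ≤ 1 + t1 + t2 + t3 ∧ 0 ≤ 1 - t1 - t2 + t3 ∧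
      0 ≤ 1 + t1 - t2 - t3 ∧ 0 ≤ 1 - t1 + t2 - t3 := by
  rw [ptb_bd, bd_psd_iff]
  constructor <;> rintro ⟨x1, x2, x3, x4⟩ <;>
    exact ⟨by linarith, by linarith, by linarith, by linarith⟩

end
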